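/- arXiv:1008.5291 — 5 statements merged into one kernel-verified Lean document; each statement's English description precedes it below -/
import Mathlib

section
/- Let w : ℤ^r → ℤ^r be the linear map sending α_k to e_k - e_{k+1} for 1 ≤ k ≤ r-1 and α_r to e_{r-1} + e_r, where e_1,…,e_r is the standard basis. Then w maps Φ_{r,Z} bijectively onto the set {e_i - e_j : 1 ≤ i < j ≤ r} ∪ {e_i + e_j : 1 ≤ i < j ≤ r} ∪ {2e_j : j ∈ Z}. -/
/-- The standard basis vector `α_i` of `ℤ^r` (1-indexed). -/
def alphaV (r i : ℕ) : Fin r → ℤ := fun k => if (k : ℕ) + 1 = i then 1 else 0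

/-- `η_{i,j} = α_i + ⋯ + α_j` for `i ≤ j`, and `0` for `i > j` (1-indexed). -/
def eta (r i j : ℕ) : Fin r → ℤ := fun k => if i ≤ (k : ℕ) + 1 ∧ (k : ℕ) + 1 ≤ j then 1 else 0

/-- The root set `Φ_{r,Z}`. -/
def Phi (r : ℕ) (Z : Finset ℕ) : Set (Fin r → ℤ) :=
  {v | ∃ i j, 1 ≤ i ∧ i < j ∧ j ≤ r ∧ v = eta r i (j - 1)} ∪
  {v | ∃ i, 1 ≤ i ∧ i < r ∧ v = eta r i (r - 2) + alphaV r r} ∪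
  {v | ∃ i j, 1 ≤ i ∧ i < j ∧ j < r ∧ v = eta r i r + eta r j (r - 2)} ∪
  {v | ∃ j ∈ Z, v = eta r j r + eta r j (r - 2)}

/-- The root set `Ψ_{r,Y}`. -/
def Psi (r : ℕ) (Y : Finset ℕ) : Set (Fin r → ℤ) :=
  {v | ∃ i j, 1 ≤ i ∧ i ≤ j ∧ j ≤ r ∧ v = eta r i j} ∪
  {v | ∃ i j, 1 ≤ i ∧ i < j ∧ j < r ∧ v = eta r i r + eta r j (r - 1)} ∪
  {v | ∃ j ∈ Y, v = eta r j r + eta r j (r - 1)}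

lemma eta_split (r i j : ℕ) (hij : i ≤ j + 1) :
    eta r i (j + 1) = eta r i j + alphaV r (j + 1) := by
  funext k
  simp only [eta, alphaV, Pi.add_apply]
  split_ifs <;> omega

lemma eta_top (r i : ℕ) (hi : i ≤ r) : eta r i r = eta r i (r - 1) + alphaV r r := by
  funext k
  have hk := k.isLt
  simp only [eta, alphaV, Pi.add_apply]
  split_ifs <;> omega

lemma eta_zero (r i j : ℕ) (h : j < i) : eta r i j = 0 := by
  funext k
  simp only [eta, Pi.zero_apply, ite_eq_right_iff]
  omega

/-- Columns of the "double inverse" matrix of `w`. -/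
def colM (r : ℕ) (k m : Fin r) : ℤ :=
  if (k : ℕ) + 1 ≤ r - 1 then
    2 * (if (k : ℕ) + 1 ≤ (m : ℕ) + 1 ∧ (m : ℕ) + 1 ≤ r - 2 then 1 else 0)
      + (if (m : ℕ) + 1 = r - 1 then 1 else 0) + (if (m : ℕ) + 1 = r then 1 else 0)
  else (if (m : ℕ) + 1 = r then 1 else 0) - (if (m : ℕ) + 1 = r - 1 then 1 else 0)

def Mlin (r : ℕ) : (Fin r → ℤ) →ₗ[ℤ] (Fin r → ℤ) where
  toFun v := fun m => ∑ k, v k * colM r k m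
  map_add' u v := by
    funext m
    simp [add_mul, Finset.sum_add_distrib]
  map_smul' a v := by
    funext m
    simp [Finset.mul_sum, mul_assoc]

lemma Mlin_alpha (r a : ℕ) (h1 : 1 ≤ a) (h2 : a ≤ r) :
    Mlin r (alphaV r a) = fun m => colM r ⟨a - 1, by omega⟩ m := by
  funext m
  show (∑ k, (alphaV r a) k * colM r k m) = _
  rw [Finset.sum_eq_single (⟨a - 1, by omega⟩ : Fin r)]
  · have h : ((⟨a - 1, by omega⟩ : Fin r) : ℕ) + 1 = a := by simp; omega
    simp [alphaV, h]
  · intro k _ hk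
    have : ¬ ((k : ℕ) + 1 = a) := by
      intro hc
      exact hk (Fin.ext (show (k : ℕ) = a - 1 by omega))
    simp [alphaV, this]
  · exact fun h => absurd (Finset.mem_univ _) h

lemma repr_sum (r : ℕ) (x : Fin r → ℤ) :
    x = ∑ k : Fin r, x k • alphaV r ((k : ℕ) + 1) := by
  funext m
  rw [Finset.sum_apply]
  rw [Finset.sum_eq_single m]
  · simp [alphaV]
  · intro k _ hk
    have : ¬ ((m : ℕ) + 1 = (k : ℕ) + 1) := by
      intro hc
      exact hk (Fin.ext (show (k : ℕ) = (m : ℕ) by omega))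
    simp [alphaV, this]
    exact fun hc => absurd (Fin.ext hc).symm hk
  · exact fun h => absurd (Finset.mem_univ _) h

lemma Mlin_alpha' (r a : ℕ) (h1 : 1 ≤ a) (h2 : a ≤ r) (m : Fin r) :
    Mlin r (alphaV r a) m =
      if a ≤ r - 1 then
        2 * (if a ≤ (m : ℕ) + 1 ∧ (m : ℕ) + 1 ≤ r - 2 then 1 else 0)
          + (if (m : ℕ) + 1 = r - 1 then 1 else 0) + (if (m : ℕ) + 1 = r then 1 else 0)
      else (if (m : ℕ) + 1 = r then 1 else 0) - (if (m : ℕ) + 1 = r - 1 then 1 else 0) := by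
  rw [Mlin_alpha r a h1 h2]
  simp only [colM, Fin.val_mk]
  split_ifs <;> omega

lemma Mlin_w (r : ℕ) (hr : 3 ≤ r) (w : (Fin r → ℤ) →ₗ[ℤ] (Fin r → ℤ))
    (hw1 : ∀ k, 1 ≤ k → k ≤ r - 1 → w (alphaV r k) = alphaV r k - alphaV r (k + 1))
    (hw2 : w (alphaV r r) = alphaV r (r - 1) + alphaV r r) :
    ∀ x, Mlin r (w x) = (2 : ℤ) • x := by
  have hbasis : ∀ k : Fin r, Mlin r (w (alphaV r ((k : ℕ) + 1)))
      = (2 : ℤ) • alphaV r ((k : ℕ) + 1) := by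
    intro k
    have hk := k.isLt
    by_cases h : (k : ℕ) + 1 ≤ r - 1
    · rw [hw1 _ (by omega) h, map_sub]
      funext m
      have hm := m.isLt
      rw [Pi.sub_apply, Mlin_alpha' r ((k : ℕ) + 1) (by omega) (by omega) m,
        Mlin_alpha' r ((k : ℕ) + 1 + 1) (by omega) (by omega) m]
      simp only [alphaV, Pi.smul_apply, smul_eq_mul]
      split_ifs <;> omega
    · have hkr : (k : ℕ) + 1 = r := by omega
      rw [hkr, hw2]
      funext m
      have hm := m.isLt
      rw [map_add, Pi.add_apply, Mlin_alpha' r (r - 1) (by omega) (by omega) m,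
        Mlin_alpha' r r (by omega) (le_refl r) m]
      simp only [alphaV, Pi.smul_apply, smul_eq_mul]
      split_ifs <;> omega
  intro x
  calc Mlin r (w x) = Mlin r (w (∑ k, x k • alphaV r ((k : ℕ) + 1))) := by rw [← repr_sum]
    _ = ∑ k, x k • Mlin r (w (alphaV r ((k : ℕ) + 1))) := by simp only [map_sum, map_smul]
    _ = ∑ k, x k • ((2 : ℤ) • alphaV r ((k : ℕ) + 1)) :=
        Finset.sum_congr rfl (fun k _ => by rw [hbasis k])
    _ = (2 : ℤ) • ∑ k, x k • alphaV r ((k : ℕ) + 1) := by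
        rw [Finset.smul_sum]
        exact Finset.sum_congr rfl fun k _ => smul_comm _ _ _
    _ = (2 : ℤ) • x := by rw [← repr_sum]

theorem phi_image (r : ℕ) (hr : 3 ≤ r) (Z : Finset ℕ) (hZ : Z ⊆ Finset.Icc 1 (r - 1))
    (w : (Fin r → ℤ) →ₗ[ℤ] (Fin r → ℤ))
    (hw1 : ∀ k, 1 ≤ k → k ≤ r - 1 → w (alphaV r k) = alphaV r k - alphaV r (k + 1))
    (hw2 : w (alphaV r r) = alphaV r (r - 1) + alphaV r r) :
    Set.BijOn w (Phi r Z)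
      ({v | ∃ i j, 1 ≤ i ∧ i < j ∧ j ≤ r ∧ v = alphaV r i - alphaV r j} ∪
       {v | ∃ i j, 1 ≤ i ∧ i < j ∧ j ≤ r ∧ v = alphaV r i + alphaV r j} ∪
       {v | ∃ j ∈ Z, v = (2 : ℤ) • alphaV r j}) := by
  -- computation of w on the η's
  have hEta : ∀ j i : ℕ, 1 ≤ i → i ≤ j + 1 → j ≤ r - 1 →
      w (eta r i j) = alphaV r i - alphaV r (j + 1) := by
    intro j
    induction j with
    | zero =>
      intro i h1 h2 _
      have : i = 1 := by omega
      subst this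
      rw [eta_zero r 1 0 (by omega), map_zero, sub_self]
    | succ j ih =>
      intro i h1 h2 h3
      by_cases hij : i ≤ j + 1
      · rw [eta_split r i j hij, map_add, ih i h1 (by omega) (by omega),
          hw1 (j + 1) (by omega) h3]
        abel
      · have : i = j + 2 := by omega
        subst this
        rw [eta_zero r (j + 2) (j + 1) (by omega), map_zero, sub_self]
  have hEtaR : ∀ i : ℕ, 1 ≤ i → i ≤ r → w (eta r i r) = alphaV r i + alphaV r (r - 1) := by
    intro i h1 h2
    rw [eta_top r i h2, map_add, hw2, hEta (r - 1) i h1 (by omega) (by omega),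
      show r - 1 + 1 = r from by omega]
    abel
  refine ⟨?_, ?_, ?_⟩
  · -- MapsTo
    rintro v ((((⟨i, j, h1, h2, h3, rfl⟩ | ⟨i, h1, h2, rfl⟩) | ⟨i, j, h1, h2, h3, rfl⟩) |
      ⟨j, hjZ, rfl⟩))
    · left; left
      exact ⟨i, j, h1, h2, h3, by
        rw [hEta (j - 1) i h1 (by omega) (by omega), show j - 1 + 1 = j from by omega]⟩
    · left; right
      refine ⟨i, r, h1, h2, le_refl r, ?_⟩
      rw [map_add, hEta (r - 2) i h1 (by omega) (by omega), hw2,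
        show r - 2 + 1 = r - 1 from by omega]
      abel
    · left; right
      refine ⟨i, j, h1, h2, by omega, ?_⟩
      rw [map_add, hEtaR i h1 (by omega), hEta (r - 2) j (by omega) (by omega) (by omega),
        show r - 2 + 1 = r - 1 from by omega]
      abel
    · right
      have hj := Finset.mem_Icc.mp (hZ hjZ)
      refine ⟨j, hjZ, ?_⟩
      rw [map_add, hEtaR j (by omega) (by omega),
        hEta (r - 2) j (by omega) (by omega) (by omega),
        show r - 2 + 1 = r - 1 from by omega, two_smul]
      abel
  · -- InjOn
    intro u _ v _ h
    have h2 : (2 : ℤ) • u = (2 : ℤ) • v := by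
      rw [← Mlin_w r hr w hw1 hw2 u, ← Mlin_w r hr w hw1 hw2 v, h]
    funext m
    have := congrFun h2 m
    simp only [Pi.smul_apply, smul_eq_mul] at this
    omega
  · -- SurjOn
    rintro t ((⟨i, j, h1, h2, h3, rfl⟩ | ⟨i, j, h1, h2, h3, rfl⟩) | ⟨j, hjZ, rfl⟩)
    · refine ⟨eta r i (j - 1), Or.inl (Or.inl (Or.inl ⟨i, j, h1, h2, h3, rfl⟩)), ?_⟩
      rw [hEta (j - 1) i h1 (by omega) (by omega), show j - 1 + 1 = j from by omega]
    · by_cases hjr : j = r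
      · refine ⟨eta r i (r - 2) + alphaV r r,
          Or.inl (Or.inl (Or.inr ⟨i, h1, by omega, rfl⟩)), ?_⟩
        rw [map_add, hEta (r - 2) i h1 (by omega) (by omega), hw2,
          show r - 2 + 1 = r - 1 from by omega, hjr]
        abel
      · refine ⟨eta r i r + eta r j (r - 2),
          Or.inl (Or.inr ⟨i, j, h1, h2, by omega, rfl⟩), ?_⟩
        rw [map_add, hEtaR i h1 (by omega), hEta (r - 2) j (by omega) (by omega) (by omega),
          show r - 2 + 1 = r - 1 from by omega]
        abel
    · have hj := Finset.mem_Icc.mp (hZ hjZ)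
      refine ⟨eta r j r + eta r j (r - 2), Or.inr ⟨j, hjZ, rfl⟩, ?_⟩
      rw [map_add, hEtaR j (by omega) (by omega),
        hEta (r - 2) j (by omega) (by omega) (by omega),
        show r - 2 + 1 = r - 1 from by omega, two_smul]
      abel
end

section
/- Let w : ℤ^r → ℤ^r be the linear map sending α_k to e_k - e_{k+1} for 1 ≤ k ≤ r-1 and α_r to 2e_r, where e_1,…,e_r is the standard basis. Then w maps Ψ_{r,Y} bijectively onto the set {e_i - e_j : 1 ≤ i < j ≤ r} ∪ {e_i + e_j : 1 ≤ i < j ≤ r} ∪ {2e_r} ∪ {2e_j : j ∈ Y}. -/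
set_option linter.unnecessarySeqFocus false

lemma eta_eq_sum (r i j : ℕ) : eta r i j = ∑ k ∈ Finset.Icc i j, alphaV r k := by
  funext m
  simp only [eta, alphaV, Finset.sum_apply, Finset.sum_ite_eq, Finset.mem_Icc]

lemma w_eta_lt (r : ℕ) (w : (Fin r → ℤ) →ₗ[ℤ] (Fin r → ℤ))
    (hw1 : ∀ k, 1 ≤ k → k ≤ r - 1 → w (alphaV r k) = alphaV r k - alphaV r (k + 1))
    {i j : ℕ} (h1 : 1 ≤ i) (h2 : i ≤ j) (h3 : j ≤ r - 1) :
    w (eta r i j) = alphaV r i - alphaV r (j + 1) := by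
  rw [eta_eq_sum, map_sum]
  rw [Finset.sum_congr rfl fun k hk => hw1 k (by simp only [Finset.mem_Icc] at hk; omega)
    (by simp only [Finset.mem_Icc] at hk; omega)]
  funext m
  rw [Finset.sum_apply]
  simp only [Pi.sub_apply, alphaV, add_left_inj]
  rw [Finset.sum_sub_distrib, Finset.sum_ite_eq, Finset.sum_ite_eq]
  simp only [Finset.mem_Icc]
  split_ifs <;> omega

lemma w_eta_r (r : ℕ) (hr : 3 ≤ r) (w : (Fin r → ℤ) →ₗ[ℤ] (Fin r → ℤ))
    (hw1 : ∀ k, 1 ≤ k → k ≤ r - 1 → w (alphaV r k) = alphaV r k - alphaV r (k + 1))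
    (hw2 : w (alphaV r r) = (2 : ℤ) • alphaV r r)
    {i : ℕ} (h1 : 1 ≤ i) (h2 : i ≤ r) :
    w (eta r i r) = alphaV r i + alphaV r r := by
  rcases h2.lt_or_eq with h | rfl
  · have hins : Finset.Icc i r = insert r (Finset.Icc i (r-1)) := by
      ext x; simp only [Finset.mem_Icc, Finset.mem_insert]; omega
    rw [eta_eq_sum, hins, Finset.sum_insert (by simp only [Finset.mem_Icc]; omega), map_add, hw2,
      ← eta_eq_sum, w_eta_lt r w hw1 h1 (by omega) le_rfl, show r - 1 + 1 = r by omega, two_smul]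
    abel
  · have heq : eta i i i = alphaV i i := by
      funext m
      simp only [eta, alphaV]
      rw [if_congr (by omega : (i ≤ (m:ℕ)+1 ∧ (m:ℕ)+1 ≤ i) ↔ ((m:ℕ)+1 = i)) rfl rfl]
    rw [heq, hw2, two_smul]

lemma sum_ind (r a : ℕ) :
    ∑ n ∈ Finset.range r, (if n + 1 = a then (1:ℤ) else 0) = if 1 ≤ a ∧ a ≤ r then 1 else 0 := by
  induction r with
  | zero => simp; omega
  | succ n ih => rw [Finset.sum_range_succ, ih]; split_ifs <;> omega

lemma sum_ind_le (r a m : ℕ) :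
    ∑ n ∈ Finset.range r, (if n ≤ m then (if n + 1 = a then (1:ℤ) else 0) else 0) =
      if 1 ≤ a ∧ a ≤ m + 1 ∧ a ≤ r then 1 else 0 := by
  induction r with
  | zero => simp; omega
  | succ n ih => rw [Finset.sum_range_succ, ih]; split_ifs <;> omega

def uMap (r : ℕ) : (Fin r → ℤ) →ₗ[ℤ] (Fin r → ℤ) where
  toFun v := fun m => if (m:ℕ) = r - 1 then ∑ k, v k
    else 2 * ∑ k ∈ Finset.univ.filter (fun k : Fin r => (k:ℕ) ≤ (m:ℕ)), v k
  map_add' a b := by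
    funext m
    by_cases h : (m:ℕ) = r - 1 <;> simp [h, Finset.sum_add_distrib] <;> ring
  map_smul' c a := by
    funext m
    by_cases h : (m:ℕ) = r - 1 <;> simp [h, Finset.mul_sum, mul_left_comm, mul_comm] <;>
      exact Finset.sum_congr rfl fun x _ => by ring

lemma uMap_alpha (r a : ℕ) : uMap r (alphaV r a) = fun m : Fin r =>
    if (m:ℕ) = r - 1 then (if 1 ≤ a ∧ a ≤ r then 1 else 0)
    else 2 * (if 1 ≤ a ∧ a ≤ (m:ℕ) + 1 ∧ a ≤ r then 1 else 0) := by
  funext m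
  show (if (m:ℕ) = r - 1 then ∑ k, alphaV r a k
    else 2 * ∑ k ∈ Finset.univ.filter (fun k : Fin r => (k:ℕ) ≤ (m:ℕ)), alphaV r a k) = _
  rw [Finset.sum_filter]
  simp only [alphaV]
  rw [Fin.sum_univ_eq_sum_range (fun n => if n + 1 = a then (1:ℤ) else 0),
    Fin.sum_univ_eq_sum_range (fun n => if n ≤ (m:ℕ) then (if n + 1 = a then (1:ℤ) else 0) else 0),
    sum_ind, sum_ind_le]

lemma w_injective (r : ℕ) (hr : 3 ≤ r) (w : (Fin r → ℤ) →ₗ[ℤ] (Fin r → ℤ))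
    (hw1 : ∀ k, 1 ≤ k → k ≤ r - 1 → w (alphaV r k) = alphaV r k - alphaV r (k + 1))
    (hw2 : w (alphaV r r) = (2 : ℤ) • alphaV r r) : Function.Injective w := by
  have hb : ∀ i : Fin r, (Pi.basisFun ℤ (Fin r)) i = alphaV r ((i:ℕ) + 1) := by
    intro i; funext m
    simp only [Pi.basisFun_apply, Pi.single_apply, alphaV]
    rw [if_congr (by rw [Fin.ext_iff]; omega : (m = i) ↔ ((m:ℕ)+1 = (i:ℕ)+1)) rfl rfl]
  have h2 : (uMap r).comp w = (2:ℤ) • LinearMap.id := by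
    apply Module.Basis.ext (Pi.basisFun ℤ (Fin r))
    intro i
    rw [LinearMap.comp_apply, hb i, LinearMap.smul_apply, LinearMap.id_apply]
    by_cases hi : (i:ℕ) + 1 = r
    · rw [hi, hw2, map_smul, uMap_alpha]
      funext m
      have hm := m.isLt
      simp only [Pi.smul_apply, alphaV, smul_eq_mul]
      split_ifs <;> omega
    · have hi2 := i.isLt
      rw [hw1 ((i:ℕ)+1) (by omega) (by omega), map_sub, uMap_alpha, uMap_alpha]
      funext m
      have hm := m.isLt
      simp only [Pi.smul_apply, Pi.sub_apply, alphaV, smul_eq_mul]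
      split_ifs <;> omega
  intro a b hab
  have h3 : (2:ℤ) • a = (2:ℤ) • b := by
    have ha := LinearMap.congr_fun h2 a
    have hbb := LinearMap.congr_fun h2 b
    simp only [LinearMap.comp_apply, LinearMap.smul_apply, LinearMap.id_apply] at ha hbb
    rw [← ha, ← hbb, hab]
  exact smul_right_injective (Fin r → ℤ) (by norm_num) h3

theorem psi_image (r : ℕ) (hr : 3 ≤ r) (Y : Finset ℕ) (hY : Y ⊆ Finset.Icc 1 (r - 1))
    (w : (Fin r → ℤ) →ₗ[ℤ] (Fin r → ℤ))
    (hw1 : ∀ k, 1 ≤ k → k ≤ r - 1 → w (alphaV r k) = alphaV r k - alphaV r (k + 1))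
    (hw2 : w (alphaV r r) = (2 : ℤ) • alphaV r r) :
    Set.BijOn w (Psi r Y)
      ({v | ∃ i j, 1 ≤ i ∧ i < j ∧ j ≤ r ∧ v = alphaV r i - alphaV r j} ∪
       {v | ∃ i j, 1 ≤ i ∧ i < j ∧ j ≤ r ∧ v = alphaV r i + alphaV r j} ∪
       {(2 : ℤ) • alphaV r r} ∪
       {v | ∃ j ∈ Y, v = (2 : ℤ) • alphaV r j}) := by
  have hA : ∀ {i j : ℕ}, 1 ≤ i → i ≤ j → j ≤ r - 1 →
      w (eta r i j) = alphaV r i - alphaV r (j + 1) := fun h1 h2 h3 => w_eta_lt r w hw1 h1 h2 h3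
  have hB : ∀ {i : ℕ}, 1 ≤ i → i ≤ r → w (eta r i r) = alphaV r i + alphaV r r :=
    fun h1 h2 => w_eta_r r hr w hw1 hw2 h1 h2
  have hC : ∀ {i j : ℕ}, 1 ≤ i → i < j → j < r →
      w (eta r i r + eta r j (r - 1)) = alphaV r i + alphaV r j := by
    intro i j h1 h2 h3
    rw [map_add, hB h1 (by omega), hA (by omega) (by omega) le_rfl, show r - 1 + 1 = r by omega]
    abel
  have hD : ∀ {j : ℕ}, 1 ≤ j → j < r →
      w (eta r j r + eta r j (r - 1)) = (2:ℤ) • alphaV r j := by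
    intro j h1 h2
    rw [map_add, hB h1 (by omega), hA h1 (by omega) le_rfl, show r - 1 + 1 = r by omega, two_smul]
    abel
  refine ⟨?_, (w_injective r hr w hw1 hw2).injOn, ?_⟩
  · -- MapsTo
    rintro v hv
    simp only [Psi, Set.mem_union, Set.mem_setOf_eq] at hv
    simp only [Set.mem_union, Set.mem_setOf_eq, Set.mem_singleton_iff]
    rcases hv with (⟨i, j, h1, h2, h3, rfl⟩ | ⟨i, j, h1, h2, h3, rfl⟩) | ⟨j, hj, rfl⟩
    · rcases h3.lt_or_eq with h | rfl
      · exact Or.inl (Or.inl (Or.inl ⟨i, j + 1, h1, by omega, by omega, hA h1 h2 (by omega)⟩))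
      · rcases h2.lt_or_eq with h' | rfl
        · exact Or.inl (Or.inl (Or.inr ⟨i, j, h1, h', le_rfl, hB h1 (by omega)⟩))
        · exact Or.inl (Or.inr (by rw [hB h1 le_rfl, two_smul]))
    · exact Or.inl (Or.inl (Or.inr ⟨i, j, h1, h2, by omega, hC h1 h2 h3⟩))
    · have hj' := hY hj
      simp only [Finset.mem_Icc] at hj'
      exact Or.inr ⟨j, hj, hD hj'.1 (by omega)⟩
  · -- SurjOn
    rintro v hv
    simp only [Set.mem_union, Set.mem_setOf_eq, Set.mem_singleton_iff] at hv
    have mem1 : ∀ {i j : ℕ}, 1 ≤ i → i ≤ j → j ≤ r → eta r i j ∈ Psi r Y :=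
      fun h1 h2 h3 => Or.inl (Or.inl ⟨_, _, h1, h2, h3, rfl⟩)
    rcases hv with ((⟨i, j, h1, h2, h3, rfl⟩ | ⟨i, j, h1, h2, h3, rfl⟩) | rfl) | ⟨j, hj, rfl⟩
    · exact ⟨eta r i (j - 1), mem1 h1 (by omega) (by omega),
        by rw [hA h1 (by omega) (by omega), show j - 1 + 1 = j by omega]⟩
    · rcases h3.lt_or_eq with h | rfl
      · exact ⟨eta r i r + eta r j (r - 1),
          Or.inl (Or.inr ⟨i, j, h1, h2, h, rfl⟩), hC h1 h2 h⟩
      · exact ⟨eta j i j, mem1 h1 (by omega) le_rfl, hB h1 (by omega)⟩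
    · exact ⟨eta r r r, mem1 (by omega) le_rfl le_rfl, by rw [hB (by omega) le_rfl, two_smul]⟩
    · have hj' := hY hj
      simp only [Finset.mem_Icc] at hj'
      exact ⟨eta r j r + eta r j (r - 1), Or.inr ⟨j, hj, rfl⟩, hD hj'.1 (by omega)⟩
end

section
/- The Cartan matrix C = (c_{ij}) associated to Φ_{r,Z} is given by: c_{ii} = 2; c_{ij} = -1 if |i-j| = 1 and i,j ≤ r-1; c_{r-2,r} = c_{r,r-2} = -1; c_{r-1,r} = c_{r,r-1} = -1 if r-1 ∈ Z and 0 if r-1 ∉ Z; and c_{ij} = 0 in all remaining cases with i ≠ j. Here c_{ij} for i ≠ j is defined by c_{ij} = -max{ k ∈ ℕ₀ : kα_i + α_j ∈ Φ_{r,Z} }. -/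
private lemma alpha_eq_eta' (r m : ℕ) : alphaV r m = eta r m m := by
  funext x; simp only [alphaV, eta]; split_ifs <;> first | rfl | omega

private lemma coord2 {r a b cc d i j k : ℕ}
    (h : (k : ℤ) • alphaV r i + alphaV r j = eta r a b + eta r cc d)
    (p : ℕ) (h1 : 1 ≤ p) (h2 : p ≤ r) :
    (if p = i then (k:ℤ) else 0) + (if p = j then 1 else 0) =
      (if a ≤ p ∧ p ≤ b then 1 else 0) + (if cc ≤ p ∧ p ≤ d then 1 else 0) := by
  have := congrFun h ⟨p - 1, by omega⟩
  simp only [Pi.add_apply, Pi.smul_apply, smul_eq_mul, alphaV, eta, Fin.val_mk] at this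
  rw [Nat.sub_add_cancel h1] at this
  rw [mul_ite, mul_one, mul_zero] at this
  exact this

private lemma coord1 {r a b i j k : ℕ}
    (h : (k : ℤ) • alphaV r i + alphaV r j = eta r a b)
    (p : ℕ) (h1 : 1 ≤ p) (h2 : p ≤ r) :
    (if p = i then (k:ℤ) else 0) + (if p = j then 1 else 0) =
      (if a ≤ p ∧ p ≤ b then 1 else 0) := by
  have := congrFun h ⟨p - 1, by omega⟩
  simp only [Pi.add_apply, Pi.smul_apply, smul_eq_mul, alphaV, eta, Fin.val_mk] at this
  rw [Nat.sub_add_cancel h1] at this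
  rw [mul_ite, mul_one, mul_zero] at this
  exact this

private def Cond (r : ℕ) (Z : Finset ℕ) (i j : ℕ) : Prop :=
  ((j = i + 1 ∨ i = j + 1) ∧ i ≤ r - 1 ∧ j ≤ r - 1) ∨
  ((i = r - 2 ∧ j = r) ∨ (i = r ∧ j = r - 2)) ∨
  (((i = r - 1 ∧ j = r) ∨ (i = r ∧ j = r - 1)) ∧ r - 1 ∈ Z)

private lemma mem_iff (r : ℕ) (hr : 4 ≤ r) (Z : Finset ℕ) (hZ : Z ⊆ Finset.Icc 1 (r - 1))
    (i j : ℕ) (hi1 : 1 ≤ i) (hir : i ≤ r) (hj1 : 1 ≤ j) (hjr : j ≤ r) (hij : i ≠ j) (k : ℕ) :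
    (k : ℤ) • alphaV r i + alphaV r j ∈ Phi r Z ↔ k = 0 ∨ (k = 1 ∧ Cond r Z i j) := by
  constructor
  · rintro (((⟨a, b, ha1, hab, hbr, h⟩ | ⟨a, ha1, har, h⟩) | ⟨a, b, ha1, hab, hbr, h⟩) | ⟨b, hbZ, h⟩)
    · -- Case A
      have H := coord1 h
      by_cases hk : k = 0
      · exact Or.inl hk
      have F1 := H i hi1 hir
      rw [if_pos rfl, if_neg hij] at F1
      have hk1 : k = 1 ∧ (a ≤ i ∧ i ≤ b - 1) := by
        split_ifs at F1 with hA
        · exact ⟨by omega, hA⟩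
        · omega
      obtain ⟨hk1, hai, hib⟩ := hk1
      have F2 := H j hj1 hjr
      rw [if_neg (fun hh => hij hh.symm), if_pos rfl] at F2
      have hj2 : a ≤ j ∧ j ≤ b - 1 := by
        split_ifs at F2 with hA
        · exact hA
        · omega
      have F3 := H a ha1 (by omega)
      rw [if_pos (by omega : a ≤ a ∧ a ≤ b - 1)] at F3
      have ha : a = i ∨ a = j := by
        by_contra hc
        push_neg at hc
        rw [if_neg hc.1, if_neg hc.2] at F3; omega
      have F4 := H (b - 1) (by omega) (by omega)
      rw [if_pos (by omega : a ≤ b - 1 ∧ b - 1 ≤ b - 1)] at F4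
      have hb : b - 1 = i ∨ b - 1 = j := by
        by_contra hc
        push_neg at hc
        rw [if_neg hc.1, if_neg hc.2] at F4; omega
      refine Or.inr ⟨hk1, ?_⟩
      rcases Nat.lt_or_ge i j with hlt | hge
      · have hai' : a = i := by omega
        have hbj : b - 1 = j := by omega
        have F5 := H (i + 1) (by omega) (by omega)
        rw [if_pos (by omega : a ≤ i + 1 ∧ i + 1 ≤ b - 1), if_neg (by omega : ¬ i + 1 = i)] at F5
        have : i + 1 = j := by
          by_contra hc
          rw [if_neg hc] at F5; omega
        exact Or.inl ⟨Or.inl this.symm, by omega, by omega⟩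
      · have hlt : j < i := by omega
        have haj : a = j := by omega
        have hbi : b - 1 = i := by omega
        have F5 := H (j + 1) (by omega) (by omega)
        rw [if_pos (by omega : a ≤ j + 1 ∧ j + 1 ≤ b - 1), if_neg (by omega : ¬ j + 1 = j)] at F5
        have hji : j + 1 = i := by
          by_contra hc
          rw [if_neg hc] at F5
          omega
        exact Or.inl ⟨Or.inr hji.symm, by omega, by omega⟩
    · -- Case B
      rw [alpha_eq_eta' r r] at h
      have H := coord2 h
      by_cases hk : k = 0
      · exact Or.inl hk
      have Fr := H r (by omega) (by omega)
      rw [if_neg (by omega : ¬ (a ≤ r ∧ r ≤ r - 2)), if_pos (by omega : r ≤ r ∧ r ≤ r)] at Fr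
      by_cases hi : i = r
      · have hjne : ¬ r = j := by omega
        rw [if_pos hi.symm, if_neg hjne] at Fr
        have hk1 : k = 1 := by omega
        have Fj := H j hj1 hjr
        rw [if_neg (fun hh => hij hh.symm), if_pos rfl, if_neg (by omega : ¬ (r ≤ j ∧ j ≤ r))] at Fj
        have hjr2 : a ≤ j ∧ j ≤ r - 2 := by
          split_ifs at Fj with hA
          · exact hA
          · omega
        have Fb := H (r - 2) (by omega) (by omega)
        rw [if_pos (by omega : a ≤ r - 2 ∧ r - 2 ≤ r - 2),
          if_neg (by omega : ¬ (r ≤ r - 2 ∧ r - 2 ≤ r)),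
          if_neg (by omega : ¬ r - 2 = i)] at Fb
        have : r - 2 = j := by
          by_contra hc; rw [if_neg hc] at Fb; omega
        exact Or.inr ⟨hk1, Or.inr (Or.inl (Or.inr ⟨hi, this.symm⟩))⟩
      · have hj : j = r := by
          by_contra hc
          rw [if_neg (by omega : ¬ r = i), if_neg (by omega : ¬ r = j)] at Fr; omega
        have Fi := H i hi1 hir
        rw [if_pos rfl, if_neg hij, if_neg (by omega : ¬ (r ≤ i ∧ i ≤ r))] at Fi
        have hk1 : k = 1 ∧ (a ≤ i ∧ i ≤ r - 2) := by
          split_ifs at Fi with hA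
          · exact ⟨by omega, hA⟩
          · omega
        obtain ⟨hk1, hai, hir2⟩ := hk1
        have Fb := H (r - 2) (by omega) (by omega)
        rw [if_pos (by omega : a ≤ r - 2 ∧ r - 2 ≤ r - 2),
          if_neg (by omega : ¬ (r ≤ r - 2 ∧ r - 2 ≤ r)),
          if_neg (by omega : ¬ r - 2 = j)] at Fb
        have : r - 2 = i := by
          by_contra hc; rw [if_neg hc] at Fb; omega
        exact Or.inr ⟨hk1, Or.inr (Or.inl (Or.inl ⟨this.symm, hj⟩))⟩
    · -- Case C : contradiction
      exfalso
      have H := coord2 h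
      have F1 := H (r - 1) (by omega) (by omega)
      rw [if_pos (by omega : a ≤ r - 1 ∧ r - 1 ≤ r),
        if_neg (by omega : ¬ (b ≤ r - 1 ∧ r - 1 ≤ r - 2))] at F1
      have F2 := H r (by omega) (by omega)
      rw [if_pos (by omega : a ≤ r ∧ r ≤ r),
        if_neg (by omega : ¬ (b ≤ r ∧ r ≤ r - 2))] at F2
      have h1 : r - 1 = i ∨ r - 1 = j := by
        by_contra hc; push_neg at hc; rw [if_neg hc.1, if_neg hc.2] at F1; omega
      have h2 : r = i ∨ r = j := by
        by_contra hc; push_neg at hc; rw [if_neg hc.1, if_neg hc.2] at F2; omega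
      have Fa := H a ha1 (by omega)
      rw [if_pos (by omega : a ≤ a ∧ a ≤ r),
        if_neg (by omega : ¬ a = i), if_neg (by omega : ¬ a = j)] at Fa
      split_ifs at Fa <;> omega
    · -- Case D
      have hbI := hZ hbZ
      rw [Finset.mem_Icc] at hbI
      have H := coord2 h
      have F1 := H (r - 1) (by omega) (by omega)
      rw [if_pos (by omega : b ≤ r - 1 ∧ r - 1 ≤ r),
        if_neg (by omega : ¬ (b ≤ r - 1 ∧ r - 1 ≤ r - 2))] at F1
      have F2 := H r (by omega) (by omega)
      rw [if_pos (by omega : b ≤ r ∧ r ≤ r),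
        if_neg (by omega : ¬ (b ≤ r ∧ r ≤ r - 2))] at F2
      have h1 : r - 1 = i ∨ r - 1 = j := by
        by_contra hc; push_neg at hc; rw [if_neg hc.1, if_neg hc.2] at F1; omega
      have h2 : r = i ∨ r = j := by
        by_contra hc; push_neg at hc; rw [if_neg hc.1, if_neg hc.2] at F2; omega
      have hb' : b = r - 1 := by
        by_contra hc
        have hb2 : b ≤ r - 2 := by omega
        have Fb := H b hbI.1 (by omega)
        rw [if_pos (by omega : b ≤ b ∧ b ≤ r), if_pos (by omega : b ≤ b ∧ b ≤ r - 2),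
          if_neg (by omega : ¬ b = i), if_neg (by omega : ¬ b = j)] at Fb
        omega
      subst hb'
      have hk1 : k = 1 := by
        rcases h1 with h1 | h1
        · rw [if_pos h1, if_neg (by omega : ¬ r - 1 = j)] at F1; omega
        · rw [if_pos (by omega : r = i), if_neg (by omega : ¬ r = j)] at F2; omega
      refine Or.inr ⟨hk1, Or.inr (Or.inr ⟨?_, hbZ⟩)⟩
      rcases h1 with h1 | h1
      · exact Or.inl ⟨h1.symm, by omega⟩
      · exact Or.inr ⟨by omega, h1.symm⟩
  · rintro (hk | ⟨hk, hc⟩)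
    · subst hk
      by_cases hjr1 : j ≤ r - 1
      · refine Or.inl (Or.inl (Or.inl ⟨j, j + 1, hj1, by omega, by omega, ?_⟩))
        funext x
        have hx := x.isLt
        simp only [Pi.add_apply, Pi.smul_apply, smul_eq_mul, alphaV, eta, Nat.cast_zero,
          Nat.cast_one, mul_ite, mul_one, mul_zero, zero_mul, one_mul, zero_add, add_zero]
        split_ifs <;> omega
      · have hj' : j = r := by omega
        refine Or.inl (Or.inl (Or.inr ⟨r - 1, by omega, by omega, ?_⟩))
        funext x
        have hx := x.isLt
        simp only [Pi.add_apply, Pi.smul_apply, smul_eq_mul, alphaV, eta, Nat.cast_zero,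
          Nat.cast_one, mul_ite, mul_one, mul_zero, zero_mul, one_mul, zero_add, add_zero]
        split_ifs <;> omega
    · subst hk
      rcases hc with ⟨hadj, hi1', hj1'⟩ | (⟨hi', hj'⟩ | ⟨hi', hj'⟩) | ⟨hc3, hZm⟩
      · rcases hadj with hadj | hadj
        · refine Or.inl (Or.inl (Or.inl ⟨i, i + 2, hi1, by omega, by omega, ?_⟩))
          funext x
          have hx := x.isLt
          simp only [Pi.add_apply, Pi.smul_apply, smul_eq_mul, alphaV, eta, Nat.cast_zero,
          Nat.cast_one, mul_ite, mul_one, mul_zero, zero_mul, one_mul, zero_add, add_zero]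
          split_ifs <;> omega
        · refine Or.inl (Or.inl (Or.inl ⟨j, j + 2, hj1, by omega, by omega, ?_⟩))
          funext x
          have hx := x.isLt
          simp only [Pi.add_apply, Pi.smul_apply, smul_eq_mul, alphaV, eta, Nat.cast_zero,
          Nat.cast_one, mul_ite, mul_one, mul_zero, zero_mul, one_mul, zero_add, add_zero]
          split_ifs <;> omega
      · refine Or.inl (Or.inl (Or.inr ⟨r - 2, by omega, by omega, ?_⟩))
        funext x
        have hx := x.isLt
        simp only [Pi.add_apply, Pi.smul_apply, smul_eq_mul, alphaV, eta, Nat.cast_zero,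
          Nat.cast_one, mul_ite, mul_one, mul_zero, zero_mul, one_mul, zero_add, add_zero]
        split_ifs <;> omega
      · refine Or.inl (Or.inl (Or.inr ⟨r - 2, by omega, by omega, ?_⟩))
        funext x
        have hx := x.isLt
        simp only [Pi.add_apply, Pi.smul_apply, smul_eq_mul, alphaV, eta, Nat.cast_zero,
          Nat.cast_one, mul_ite, mul_one, mul_zero, zero_mul, one_mul, zero_add, add_zero]
        split_ifs <;> omega
      · refine Or.inr ⟨r - 1, hZm, ?_⟩
        funext x
        have hx := x.isLt
        simp only [Pi.add_apply, Pi.smul_apply, smul_eq_mul, alphaV, eta, Nat.cast_zero,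
          Nat.cast_one, mul_ite, mul_one, mul_zero, zero_mul, one_mul, zero_add, add_zero]
        rcases hc3 with ⟨hi', hj'⟩ | ⟨hi', hj'⟩ <;> split_ifs <;> omega

private lemma mySSup_one {S : Set ℕ} (h0 : ∀ k ∈ S, k ≤ 1) (h1 : 1 ∈ S) : sSup S = 1 :=
  le_antisymm (csSup_le ⟨1, h1⟩ h0) (le_csSup ⟨1, h0⟩ h1)

private lemma mySSup_zero {S : Set ℕ} (h : ∀ k ∈ S, k = 0) (h0 : 0 ∈ S) : sSup S = 0 :=
  Nat.le_zero.mp (csSup_le ⟨0, h0⟩ fun k hk => le_of_eq (h k hk))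

theorem phi_cartan (r : ℕ) (hr : 4 ≤ r) (Z : Finset ℕ) (hZ : Z ⊆ Finset.Icc 1 (r - 1))
    (c : ℕ → ℕ → ℤ)
    (hdiag : ∀ i, c i i = 2)
    (hoff : ∀ i j, i ≠ j →
      c i j = -((sSup {k : ℕ | (k : ℤ) • alphaV r i + alphaV r j ∈ Phi r Z} : ℕ) : ℤ)) :
    ∀ i j, 1 ≤ i → i ≤ r → 1 ≤ j → j ≤ r →
      c i j =
        if i = j then 2
        else if (j = i + 1 ∨ i = j + 1) ∧ i ≤ r - 1 ∧ j ≤ r - 1 then -1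
        else if (i = r - 2 ∧ j = r) ∨ (i = r ∧ j = r - 2) then -1
        else if (i = r - 1 ∧ j = r) ∨ (i = r ∧ j = r - 1) then
          (if r - 1 ∈ Z then -1 else 0)
        else 0 := by
  intro i j hi1 hir hj1 hjr
  by_cases hij : i = j
  · subst hij; rw [hdiag, if_pos rfl]
  · rw [hoff i j hij, if_neg hij]
    have key1 : Cond r Z i j →
        sSup {k : ℕ | (k : ℤ) • alphaV r i + alphaV r j ∈ Phi r Z} = 1 := by
      intro hc
      refine mySSup_one (fun k hk => ?_) ?_
      · rw [Set.mem_setOf_eq, mem_iff r hr Z hZ i j hi1 hir hj1 hjr hij] at hk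
        rcases hk with h | ⟨h, _⟩ <;> omega
      · rw [Set.mem_setOf_eq, mem_iff r hr Z hZ i j hi1 hir hj1 hjr hij]
        exact Or.inr ⟨rfl, hc⟩
    have key0 : ¬ Cond r Z i j →
        sSup {k : ℕ | (k : ℤ) • alphaV r i + alphaV r j ∈ Phi r Z} = 0 := by
      intro hc
      refine mySSup_zero (fun k hk => ?_) ?_
      · rw [Set.mem_setOf_eq, mem_iff r hr Z hZ i j hi1 hir hj1 hjr hij] at hk
        rcases hk with h | ⟨_, hcc⟩
        · exact h
        · exact absurd hcc hc
      · rw [Set.mem_setOf_eq, mem_iff r hr Z hZ i j hi1 hir hj1 hjr hij]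
        exact Or.inl rfl
    by_cases h1 : (j = i + 1 ∨ i = j + 1) ∧ i ≤ r - 1 ∧ j ≤ r - 1
    · rw [if_pos h1, key1 (Or.inl h1)]; norm_num
    by_cases h2 : (i = r - 2 ∧ j = r) ∨ (i = r ∧ j = r - 2)
    · rw [if_neg h1, if_pos h2, key1 (Or.inr (Or.inl h2))]; norm_num
    by_cases h3 : (i = r - 1 ∧ j = r) ∨ (i = r ∧ j = r - 1)
    · by_cases h4 : r - 1 ∈ Z
      · rw [if_neg h1, if_neg h2, if_pos h3, if_pos h4,
          key1 (Or.inr (Or.inr ⟨h3, h4⟩))]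
        norm_num
      · rw [if_neg h1, if_neg h2, if_pos h3, if_neg h4,
          key0 (by rintro (h | h | ⟨_, h⟩); exacts [h1 h, h2 h, h4 h])]
        norm_num
    · rw [if_neg h1, if_neg h2, if_neg h3,
        key0 (by rintro (h | h | ⟨h, _⟩); exacts [h1 h, h2 h, h3 h])]
      norm_num
end

section
/- Let σ_{r-1} : ℤ^r → ℤ^r be the linear map with σ_{r-1}(α_{r-1}) = -α_{r-1}, σ_{r-1}(α_{r-2}) = α_{r-2} + α_{r-1}, σ_{r-1}(α_r) = α_r + α_{r-1}, and σ_{r-1}(α_j) = α_j for all other j. If r-1 ∈ Z, then σ_{r-1}(Φ_{r,Z} ∪ -Φ_{r,Z}) = Ψ_{r,Z∖{r-1}} ∪ -Ψ_{r,Z∖{r-1}}. -/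
lemma alphaV_single (r : ℕ) (i : Fin r) : alphaV r ((i : ℕ) + 1) = Pi.single i 1 := by
  funext k
  simp only [alphaV, Pi.single_apply]
  by_cases h : k = i
  · simp [h]
  · rw [if_neg, if_neg h]
    simp only [Fin.ext_iff] at h
    omega

lemma sigma_formula (r : ℕ) (hr : 4 ≤ r)
    (σ : (Fin r → ℤ) →ₗ[ℤ] (Fin r → ℤ))
    (h1 : σ (alphaV r (r - 1)) = -alphaV r (r - 1))
    (h2 : σ (alphaV r (r - 2)) = alphaV r (r - 2) + alphaV r (r - 1))
    (h3 : σ (alphaV r r) = alphaV r r + alphaV r (r - 1))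
    (h4 : ∀ j, 1 ≤ j → j ≤ r → j ≠ r - 1 → j ≠ r - 2 → j ≠ r → σ (alphaV r j) = alphaV r j) :
    ∀ (v : Fin r → ℤ) (k : Fin r), σ v k =
      v k + (if (k : ℕ) + 2 = r then
        v ⟨r - 3, by omega⟩ + v ⟨r - 1, by omega⟩ - 2 * v ⟨r - 2, by omega⟩ else 0) := by
  have he3 : r - 3 < r := by omega
  have he2 : r - 2 < r := by omega
  have he1 : r - 1 < r := by omega
  let e3 : Fin r := ⟨r - 3, he3⟩
  let e2 : Fin r := ⟨r - 2, he2⟩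
  let e1 : Fin r := ⟨r - 1, he1⟩
  let ℓ : (Fin r → ℤ) →ₗ[ℤ] ℤ :=
    (LinearMap.proj e3 : (Fin r → ℤ) →ₗ[ℤ] ℤ) + (LinearMap.proj e1 : (Fin r → ℤ) →ₗ[ℤ] ℤ)
      - (2 : ℤ) • (LinearMap.proj e2 : (Fin r → ℤ) →ₗ[ℤ] ℤ)
  let T : (Fin r → ℤ) →ₗ[ℤ] (Fin r → ℤ) := LinearMap.id + ℓ.smulRight (alphaV r (r - 1))
  have hT : ∀ (v : Fin r → ℤ) (k : Fin r),
      T v k = v k + (v e3 + v e1 - 2 * v e2) * (alphaV r (r - 1) k) := by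
    intro v k
    simp only [T, ℓ, LinearMap.add_apply, LinearMap.sub_apply, LinearMap.smul_apply,
      LinearMap.id_apply, LinearMap.smulRight_apply, LinearMap.proj_apply, smul_eq_mul,
      Pi.add_apply, Pi.smul_apply]
  have hσT : σ = T := by
    apply Module.Basis.ext (Pi.basisFun ℤ (Fin r))
    intro i
    rw [Pi.basisFun_apply, ← alphaV_single]
    rcases eq_or_ne ((i : ℕ) + 1) (r - 2) with hi | hi
    · rw [hi, h2]
      funext k
      rw [hT]
      simp only [alphaV, Pi.add_apply, e3, e2, e1, Fin.val_mk]
      split_ifs <;> omega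
    · rcases eq_or_ne ((i : ℕ) + 1) (r - 1) with hi' | hi'
      · rw [hi', h1]
        funext k
        rw [hT]
        simp only [alphaV, Pi.neg_apply, e3, e2, e1, Fin.val_mk]
        split_ifs <;> omega
      · rcases eq_or_ne ((i : ℕ) + 1) r with hi'' | hi''
        · rw [hi'', h3]
          funext k
          rw [hT]
          simp only [alphaV, Pi.add_apply, e3, e2, e1, Fin.val_mk]
          split_ifs <;> omega
        · rw [h4 ((i : ℕ) + 1) (by omega) (by omega) hi' hi hi'']
          funext k
          rw [hT]
          have hilt := i.isLt
          simp only [alphaV, e3, e2, e1, Fin.val_mk]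
          split_ifs <;> omega
  intro v k
  rw [hσT, hT]
  by_cases hk : (k : ℕ) + 2 = r
  · rw [if_pos hk]
    have : alphaV r (r - 1) k = 1 := by simp only [alphaV]; rw [if_pos (by omega)]
    rw [this, mul_one]
  · rw [if_neg hk]
    have : alphaV r (r - 1) k = 0 := by simp only [alphaV]; rw [if_neg (by omega)]
    rw [this, mul_zero]

lemma sigma_invol (r : ℕ) (hr : 4 ≤ r)
    (σ : (Fin r → ℤ) →ₗ[ℤ] (Fin r → ℤ))
    (F : ∀ (v : Fin r → ℤ) (k : Fin r), σ v k =
      v k + (if (k : ℕ) + 2 = r then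
        v ⟨r - 3, by omega⟩ + v ⟨r - 1, by omega⟩ - 2 * v ⟨r - 2, by omega⟩ else 0)) :
    ∀ v, σ (σ v) = v := by
  intro v
  funext k
  simp only [F, Fin.val_mk]
  split_ifs <;> omega

set_option maxHeartbeats 2000000 in
lemma claimA (r : ℕ) (hr : 4 ≤ r) (Z : Finset ℕ) (hZ : Z ⊆ Finset.Icc 1 (r - 1))
    (σ : (Fin r → ℤ) →ₗ[ℤ] (Fin r → ℤ))
    (F : ∀ (v : Fin r → ℤ) (k : Fin r), σ v k =
      v k + (if (k : ℕ) + 2 = r then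
        v ⟨r - 3, by omega⟩ + v ⟨r - 1, by omega⟩ - 2 * v ⟨r - 2, by omega⟩ else 0)) :
    ∀ v ∈ Phi r Z, σ v ∈ Psi r (Z.erase (r - 1)) ∪ -Psi r (Z.erase (r - 1)) := by
  intro v hv
  simp only [Phi, Set.mem_union, Set.mem_setOf_eq] at hv
  simp only [Psi, Set.mem_union, Set.mem_neg, Set.mem_setOf_eq, Finset.mem_erase]
  rcases hv with (((⟨i, j, hi, hij, hjr, rfl⟩ | ⟨i, hi, hir, rfl⟩) | ⟨i, j, hi, hij, hjr, rfl⟩) | ⟨j, hjZ, rfl⟩)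
  · -- family A : eta r i (j-1)
    by_cases hc : j ≤ r - 2
    · refine Or.inl (Or.inl (Or.inl ⟨i, j - 1, hi, by omega, by omega, ?_⟩))
      funext k
      have hk := k.isLt
      rw [F]
      by_cases hk2 : (k : ℕ) + 2 = r
      · rw [if_pos hk2]
        have hkk : k = ⟨r - 2, Nat.sub_lt (Nat.lt_of_lt_of_le (by norm_num) hr) (by norm_num)⟩ := Fin.ext (by simp; omega)
        rw [hkk]
        simp only [eta, alphaV, Pi.add_apply, Fin.val_mk]
        split_ifs <;> omega
      · rw [if_neg hk2]
        simp only [eta, alphaV, Pi.add_apply, Fin.val_mk]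
        split_ifs <;> omega
    · by_cases hc1 : j = r - 1
      · refine Or.inl (Or.inl (Or.inl ⟨i, r - 1, hi, by omega, by omega, ?_⟩))
        funext k
        have hk := k.isLt
        rw [F]
        by_cases hk2 : (k : ℕ) + 2 = r
        · rw [if_pos hk2]
          have hkk : k = ⟨r - 2, Nat.sub_lt (Nat.lt_of_lt_of_le (by norm_num) hr) (by norm_num)⟩ := Fin.ext (by simp; omega)
          rw [hkk]
          simp only [eta, alphaV, Pi.add_apply, Fin.val_mk]
          split_ifs <;> omega
        · rw [if_neg hk2]
          simp only [eta, alphaV, Pi.add_apply, Fin.val_mk]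
          split_ifs <;> omega
      · have hc2 : j = r := by omega
        by_cases hic : i ≤ r - 2
        · refine Or.inl (Or.inl (Or.inl ⟨i, r - 2, hi, by omega, by omega, ?_⟩))
          funext k
          have hk := k.isLt
          rw [F]
          by_cases hk2 : (k : ℕ) + 2 = r
          · rw [if_pos hk2]
            have hkk : k = ⟨r - 2, Nat.sub_lt (Nat.lt_of_lt_of_le (by norm_num) hr) (by norm_num)⟩ := Fin.ext (by simp; omega)
            rw [hkk]
            simp only [eta, alphaV, Pi.add_apply, Fin.val_mk]
            split_ifs <;> omega
          · rw [if_neg hk2]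
            simp only [eta, alphaV, Pi.add_apply, Fin.val_mk]
            split_ifs <;> omega
        · have hic2 : i = r - 1 := by omega
          refine Or.inr (Or.inl (Or.inl ⟨r - 1, r - 1, by omega, le_refl _, by omega, ?_⟩))
          funext k
          have hk := k.isLt
          simp only [Pi.neg_apply]
          rw [F]
          by_cases hk2 : (k : ℕ) + 2 = r
          · rw [if_pos hk2]
            have hkk : k = ⟨r - 2, Nat.sub_lt (Nat.lt_of_lt_of_le (by norm_num) hr) (by norm_num)⟩ := Fin.ext (by simp; omega)
            rw [hkk]
            simp only [eta, alphaV, Pi.add_apply, Fin.val_mk]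
            split_ifs <;> omega
          · rw [if_neg hk2]
            simp only [eta, alphaV, Pi.add_apply, Fin.val_mk]
            split_ifs <;> omega
  · -- family B : eta r i (r-2) + alphaV r r
    by_cases hic : i ≤ r - 2
    · refine Or.inl (Or.inl (Or.inr ⟨i, r - 1, hi, by omega, by omega, ?_⟩))
      funext k
      have hk := k.isLt
      rw [F]
      by_cases hk2 : (k : ℕ) + 2 = r
      · rw [if_pos hk2]
        have hkk : k = ⟨r - 2, Nat.sub_lt (Nat.lt_of_lt_of_le (by norm_num) hr) (by norm_num)⟩ := Fin.ext (by simp; omega)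
        rw [hkk]
        simp only [eta, alphaV, Pi.add_apply, Fin.val_mk]
        split_ifs <;> omega
      · rw [if_neg hk2]
        simp only [eta, alphaV, Pi.add_apply, Fin.val_mk]
        split_ifs <;> omega
    · have hic2 : i = r - 1 := by omega
      refine Or.inl (Or.inl (Or.inl ⟨r - 1, r, by omega, by omega, le_refl _, ?_⟩))
      funext k
      have hk := k.isLt
      rw [F]
      by_cases hk2 : (k : ℕ) + 2 = r
      · rw [if_pos hk2]
        have hkk : k = ⟨r - 2, Nat.sub_lt (Nat.lt_of_lt_of_le (by norm_num) hr) (by norm_num)⟩ := Fin.ext (by simp; omega)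
        rw [hkk]
        simp only [eta, alphaV, Pi.add_apply, Fin.val_mk]
        split_ifs <;> omega
      · rw [if_neg hk2]
        simp only [eta, alphaV, Pi.add_apply, Fin.val_mk]
        split_ifs <;> omega
  · -- family C : eta r i r + eta r j (r-2)
    by_cases hjc : j ≤ r - 2
    · refine Or.inl (Or.inl (Or.inr ⟨i, j, hi, hij, by omega, ?_⟩))
      funext k
      have hk := k.isLt
      rw [F]
      by_cases hk2 : (k : ℕ) + 2 = r
      · rw [if_pos hk2]
        have hkk : k = ⟨r - 2, Nat.sub_lt (Nat.lt_of_lt_of_le (by norm_num) hr) (by norm_num)⟩ := Fin.ext (by simp; omega)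
        rw [hkk]
        simp only [eta, alphaV, Pi.add_apply, Fin.val_mk]
        split_ifs <;> omega
      · rw [if_neg hk2]
        simp only [eta, alphaV, Pi.add_apply, Fin.val_mk]
        split_ifs <;> omega
    · have hjc2 : j = r - 1 := by omega
      refine Or.inl (Or.inl (Or.inl ⟨i, r, hi, by omega, le_refl _, ?_⟩))
      funext k
      have hk := k.isLt
      rw [F]
      by_cases hk2 : (k : ℕ) + 2 = r
      · rw [if_pos hk2]
        have hkk : k = ⟨r - 2, Nat.sub_lt (Nat.lt_of_lt_of_le (by norm_num) hr) (by norm_num)⟩ := Fin.ext (by simp; omega)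
        rw [hkk]
        simp only [eta, alphaV, Pi.add_apply, Fin.val_mk]
        split_ifs <;> omega
      · rw [if_neg hk2]
        simp only [eta, alphaV, Pi.add_apply, Fin.val_mk]
        split_ifs <;> omega
  · -- family D : eta r j r + eta r j (r-2), j ∈ Z
    have hjb := Finset.mem_Icc.mp (hZ hjZ)
    by_cases hjc : j ≤ r - 2
    · refine Or.inl (Or.inr ⟨j, ⟨by omega, hjZ⟩, ?_⟩)
      funext k
      have hk := k.isLt
      rw [F]
      by_cases hk2 : (k : ℕ) + 2 = r
      · rw [if_pos hk2]
        have hkk : k = ⟨r - 2, Nat.sub_lt (Nat.lt_of_lt_of_le (by norm_num) hr) (by norm_num)⟩ := Fin.ext (by simp; omega)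
        rw [hkk]
        simp only [eta, alphaV, Pi.add_apply, Fin.val_mk]
        split_ifs <;> omega
      · rw [if_neg hk2]
        simp only [eta, alphaV, Pi.add_apply, Fin.val_mk]
        split_ifs <;> omega
    · have hjc2 : j = r - 1 := by omega
      refine Or.inl (Or.inl (Or.inl ⟨r, r, by omega, le_refl _, le_refl _, ?_⟩))
      funext k
      have hk := k.isLt
      rw [F]
      by_cases hk2 : (k : ℕ) + 2 = r
      · rw [if_pos hk2]
        have hkk : k = ⟨r - 2, Nat.sub_lt (Nat.lt_of_lt_of_le (by norm_num) hr) (by norm_num)⟩ := Fin.ext (by simp; omega)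
        rw [hkk]
        simp only [eta, alphaV, Pi.add_apply, Fin.val_mk]
        split_ifs <;> omega
      · rw [if_neg hk2]
        simp only [eta, alphaV, Pi.add_apply, Fin.val_mk]
        split_ifs <;> omega

set_option maxHeartbeats 2000000 in
lemma claimB (r : ℕ) (hr : 4 ≤ r) (Z : Finset ℕ) (hZ : Z ⊆ Finset.Icc 1 (r - 1))
    (hZ' : r - 1 ∈ Z)
    (σ : (Fin r → ℤ) →ₗ[ℤ] (Fin r → ℤ))
    (F : ∀ (v : Fin r → ℤ) (k : Fin r), σ v k =
      v k + (if (k : ℕ) + 2 = r then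
        v ⟨r - 3, by omega⟩ + v ⟨r - 1, by omega⟩ - 2 * v ⟨r - 2, by omega⟩ else 0)) :
    ∀ w ∈ Psi r (Z.erase (r - 1)), σ w ∈ Phi r Z ∪ -Phi r Z := by
  intro w hw
  simp only [Psi, Set.mem_union, Set.mem_setOf_eq, Finset.mem_erase] at hw
  simp only [Phi, Set.mem_union, Set.mem_neg, Set.mem_setOf_eq]
  rcases hw with ((⟨i, j, hi, hij, hjr, rfl⟩ | ⟨i, j, hi, hij, hjr, rfl⟩) | ⟨j, ⟨hjne, hjZ⟩, rfl⟩)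
  · -- Psi family 1 : eta r i j
    by_cases hc : j ≤ r - 3
    · refine Or.inl (Or.inl (Or.inl (Or.inl ⟨i, j + 1, hi, by omega, by omega, ?_⟩)))
      funext k
      have hk := k.isLt
      rw [F]
      by_cases hk2 : (k : ℕ) + 2 = r
      · rw [if_pos hk2]
        have hkk : k = ⟨r - 2, Nat.sub_lt (Nat.lt_of_lt_of_le (by norm_num) hr) (by norm_num)⟩ := Fin.ext (by simp; omega)
        rw [hkk]
        simp only [eta, alphaV, Pi.add_apply, Fin.val_mk]
        split_ifs <;> omega
      · rw [if_neg hk2]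
        simp only [eta, alphaV, Pi.add_apply, Fin.val_mk]
        split_ifs <;> omega
    · by_cases hc1 : j = r - 2
      · refine Or.inl (Or.inl (Or.inl (Or.inl ⟨i, r, hi, by omega, le_refl _, ?_⟩)))
        funext k
        have hk := k.isLt
        rw [F]
        by_cases hk2 : (k : ℕ) + 2 = r
        · rw [if_pos hk2]
          have hkk : k = ⟨r - 2, Nat.sub_lt (Nat.lt_of_lt_of_le (by norm_num) hr) (by norm_num)⟩ := Fin.ext (by simp; omega)
          rw [hkk]
          simp only [eta, alphaV, Pi.add_apply, Fin.val_mk]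
          split_ifs <;> omega
        · rw [if_neg hk2]
          simp only [eta, alphaV, Pi.add_apply, Fin.val_mk]
          split_ifs <;> omega
      · by_cases hc2 : j = r - 1
        · by_cases hic : i ≤ r - 2
          · refine Or.inl (Or.inl (Or.inl (Or.inl ⟨i, r - 1, hi, by omega, by omega, ?_⟩)))
            funext k
            have hk := k.isLt
            rw [F]
            by_cases hk2 : (k : ℕ) + 2 = r
            · rw [if_pos hk2]
              have hkk : k = ⟨r - 2, Nat.sub_lt (Nat.lt_of_lt_of_le (by norm_num) hr) (by norm_num)⟩ := Fin.ext (by simp; omega)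
              rw [hkk]
              simp only [eta, alphaV, Pi.add_apply, Fin.val_mk]
              split_ifs <;> omega
            · rw [if_neg hk2]
              simp only [eta, alphaV, Pi.add_apply, Fin.val_mk]
              split_ifs <;> omega
          · have hic2 : i = r - 1 := by omega
            refine Or.inr (Or.inl (Or.inl (Or.inl ⟨r - 1, r, by omega, by omega, le_refl _, ?_⟩)))
            funext k
            have hk := k.isLt
            simp only [Pi.neg_apply]
            rw [F]
            by_cases hk2 : (k : ℕ) + 2 = r
            · rw [if_pos hk2]
              have hkk : k = ⟨r - 2, Nat.sub_lt (Nat.lt_of_lt_of_le (by norm_num) hr) (by norm_num)⟩ := Fin.ext (by simp; omega)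
              rw [hkk]
              simp only [eta, alphaV, Pi.add_apply, Fin.val_mk]
              split_ifs <;> omega
            · rw [if_neg hk2]
              simp only [eta, alphaV, Pi.add_apply, Fin.val_mk]
              split_ifs <;> omega
        · have hc3 : j = r := by omega
          by_cases hic : i ≤ r - 2
          · refine Or.inl (Or.inl (Or.inr ⟨i, r - 1, hi, by omega, by omega, ?_⟩))
            funext k
            have hk := k.isLt
            rw [F]
            by_cases hk2 : (k : ℕ) + 2 = r
            · rw [if_pos hk2]
              have hkk : k = ⟨r - 2, Nat.sub_lt (Nat.lt_of_lt_of_le (by norm_num) hr) (by norm_num)⟩ := Fin.ext (by simp; omega)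
              rw [hkk]
              simp only [eta, alphaV, Pi.add_apply, Fin.val_mk]
              split_ifs <;> omega
            · rw [if_neg hk2]
              simp only [eta, alphaV, Pi.add_apply, Fin.val_mk]
              split_ifs <;> omega
          · by_cases hic1 : i = r - 1
            · refine Or.inl (Or.inl (Or.inl (Or.inr ⟨r - 1, by omega, by omega, ?_⟩)))
              funext k
              have hk := k.isLt
              rw [F]
              by_cases hk2 : (k : ℕ) + 2 = r
              · rw [if_pos hk2]
                have hkk : k = ⟨r - 2, Nat.sub_lt (Nat.lt_of_lt_of_le (by norm_num) hr) (by norm_num)⟩ := Fin.ext (by simp; omega)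
                rw [hkk]
                simp only [eta, alphaV, Pi.add_apply, Fin.val_mk]
                split_ifs <;> omega
              · rw [if_neg hk2]
                simp only [eta, alphaV, Pi.add_apply, Fin.val_mk]
                split_ifs <;> omega
            · have hic2 : i = r := by omega
              refine Or.inl (Or.inr ⟨r - 1, hZ', ?_⟩)
              funext k
              have hk := k.isLt
              rw [F]
              by_cases hk2 : (k : ℕ) + 2 = r
              · rw [if_pos hk2]
                have hkk : k = ⟨r - 2, Nat.sub_lt (Nat.lt_of_lt_of_le (by norm_num) hr) (by norm_num)⟩ := Fin.ext (by simp; omega)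
                rw [hkk]
                simp only [eta, alphaV, Pi.add_apply, Fin.val_mk]
                split_ifs <;> omega
              · rw [if_neg hk2]
                simp only [eta, alphaV, Pi.add_apply, Fin.val_mk]
                split_ifs <;> omega
  · -- Psi family 2 : eta r i r + eta r j (r - 1)
    by_cases hjc : j ≤ r - 2
    · refine Or.inl (Or.inl (Or.inr ⟨i, j, hi, hij, hjr, ?_⟩))
      funext k
      have hk := k.isLt
      rw [F]
      by_cases hk2 : (k : ℕ) + 2 = r
      · rw [if_pos hk2]
        have hkk : k = ⟨r - 2, Nat.sub_lt (Nat.lt_of_lt_of_le (by norm_num) hr) (by norm_num)⟩ := Fin.ext (by simp; omega)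
        rw [hkk]
        simp only [eta, alphaV, Pi.add_apply, Fin.val_mk]
        split_ifs <;> omega
      · rw [if_neg hk2]
        simp only [eta, alphaV, Pi.add_apply, Fin.val_mk]
        split_ifs <;> omega
    · have hjc2 : j = r - 1 := by omega
      refine Or.inl (Or.inl (Or.inl (Or.inr ⟨i, hi, by omega, ?_⟩)))
      funext k
      have hk := k.isLt
      rw [F]
      by_cases hk2 : (k : ℕ) + 2 = r
      · rw [if_pos hk2]
        have hkk : k = ⟨r - 2, Nat.sub_lt (Nat.lt_of_lt_of_le (by norm_num) hr) (by norm_num)⟩ := Fin.ext (by simp; omega)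
        rw [hkk]
        simp only [eta, alphaV, Pi.add_apply, Fin.val_mk]
        split_ifs <;> omega
      · rw [if_neg hk2]
        simp only [eta, alphaV, Pi.add_apply, Fin.val_mk]
        split_ifs <;> omega
  · -- Psi family 3
    have hjb := Finset.mem_Icc.mp (hZ hjZ)
    refine Or.inl (Or.inr ⟨j, hjZ, ?_⟩)
    funext k
    have hk := k.isLt
    rw [F]
    by_cases hk2 : (k : ℕ) + 2 = r
    · rw [if_pos hk2]
      have hkk : k = ⟨r - 2, Nat.sub_lt (Nat.lt_of_lt_of_le (by norm_num) hr) (by norm_num)⟩ := Fin.ext (by simp; omega)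
      rw [hkk]
      simp only [eta, alphaV, Pi.add_apply, Fin.val_mk]
      split_ifs <;> omega
    · rw [if_neg hk2]
      simp only [eta, alphaV, Pi.add_apply, Fin.val_mk]
      split_ifs <;> omega


theorem sigma_rm1_phi (r : ℕ) (hr : 4 ≤ r) (Z : Finset ℕ) (hZ : Z ⊆ Finset.Icc 1 (r - 1))
    (hZ' : r - 1 ∈ Z)
    (σ : (Fin r → ℤ) →ₗ[ℤ] (Fin r → ℤ))
    (h1 : σ (alphaV r (r - 1)) = -alphaV r (r - 1))
    (h2 : σ (alphaV r (r - 2)) = alphaV r (r - 2) + alphaV r (r - 1))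
    (h3 : σ (alphaV r r) = alphaV r r + alphaV r (r - 1))
    (h4 : ∀ j, 1 ≤ j → j ≤ r → j ≠ r - 1 → j ≠ r - 2 → j ≠ r → σ (alphaV r j) = alphaV r j) :
    σ '' (Phi r Z ∪ -Phi r Z) =
      Psi r (Z.erase (r - 1)) ∪ -Psi r (Z.erase (r - 1)) := by
  have F := sigma_formula r hr σ h1 h2 h3 h4
  have hinv := sigma_invol r hr σ F
  have hA := claimA r hr Z hZ σ F
  have hB := claimB r hr Z hZ hZ' σ F
  apply Set.Subset.antisymm
  · rintro w ⟨v, hv, rfl⟩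
    rcases hv with hv | hv
    · exact hA v hv
    · have h := hA (-v) (Set.mem_neg.mp hv)
      rw [map_neg] at h
      rcases h with h | h
      · right
        rw [Set.mem_neg]
        exact h
      · left
        have h' := Set.mem_neg.mp h
        rwa [neg_neg] at h'
  · rintro w (hw | hw)
    · exact ⟨σ w, hB w hw, hinv w⟩
    · have h := hB (-w) (Set.mem_neg.mp hw)
      rw [map_neg] at h
      refine ⟨σ w, ?_, hinv w⟩
      rcases h with h | h
      · right
        rw [Set.mem_neg]
        exact h
      · left
        have h' := Set.mem_neg.mp h
        rwa [neg_neg] at h'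
end

section
/- Let r ≥ 4 and let a_1, …, a_r be nonnegative integers satisfying: a_2 - a_1 ≥ a_1; a_{k+1} - a_k + a_{k-1} ≥ a_k for all 2 ≤ k ≤ r-3; (a_r + a_{r-1}) - a_{r-2} + a_{r-3} ≥ a_{r-2}; and a_{r-2} ≥ a_{r-1} + a_r. Then a_1 = a_2 = ⋯ = a_r = 0. -/
theorem height_argument (r : ℕ) (hr : 4 ≤ r) (a : ℕ → ℤ)
    (hpos : ∀ k, 1 ≤ k → k ≤ r → 0 ≤ a k)
    (h1 : a 1 ≤ a 2 - a 1)
    (h2 : ∀ k, 2 ≤ k → k ≤ r - 3 → a k ≤ a (k + 1) - a k + a (k - 1))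
    (h3 : a (r - 2) ≤ (a r + a (r - 1)) - a (r - 2) + a (r - 3))
    (h4 : a (r - 1) + a r ≤ a (r - 2)) :
    ∀ k, 1 ≤ k → k ≤ r → a k = 0 := by
  -- differences dominate a 1
  have hF : ∀ k, 1 ≤ k → k ≤ r - 3 → a 1 ≤ a (k + 1) - a k := by
    intro k
    induction k with
    | zero => intro h _; omega
    | succ n ih =>
      intro _ hle
      by_cases hn : n = 0
      · subst hn; simpa using h1
      · have hn1 : 1 ≤ n := Nat.one_le_iff_ne_zero.mpr hn
        have hh := h2 (n + 1) (by omega) hle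
        simp only [Nat.add_sub_cancel] at hh
        have hih := ih hn1 (by omega)
        linarith
  -- differences are nondecreasing
  have hM : ∀ m k, 1 ≤ k → k + m ≤ r - 3 →
      a (k + 1) - a k ≤ a (k + m + 1) - a (k + m) := by
    intro m
    induction m with
    | zero => intro k _ _; simp
    | succ n ih =>
      intro k hk hkm
      have h := ih k hk (by omega)
      have hh := h2 (k + n + 1) (by omega) (by omega)
      simp only [Nat.add_sub_cancel] at hh
      have e : k + (n + 1) = k + n + 1 := by omega
      rw [e]
      linarith
  have hrr : r - 3 + 1 = r - 2 := by omega
  have h33 : a (r - 2) ≤ a (r - 3) := by linarith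
  have hF' := hF (r - 3) (by omega) le_rfl
  rw [hrr] at hF'
  have ha1 : a 1 = 0 := le_antisymm (by linarith) (hpos 1 (by omega) (by omega))
  have hd0 : ∀ k, 1 ≤ k → k ≤ r - 3 → a (k + 1) = a k := by
    intro k hk hk'
    have hm := hM (r - 3 - k) k hk (by omega)
    have e1 : k + (r - 3 - k) = r - 3 := by omega
    rw [e1, hrr] at hm
    have hfk := hF k hk hk'
    linarith
  have hz : ∀ k, 1 ≤ k → k ≤ r - 2 → a k = 0 := by
    intro k
    induction k with
    | zero => intro h _; omega
    | succ n ih =>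
      intro _ hle
      by_cases hn : n = 0
      · subst hn; simpa using ha1
      · have hn1 : 1 ≤ n := Nat.one_le_iff_ne_zero.mpr hn
        rw [hd0 n hn1 (by omega)]
        exact ih hn1 (by omega)
  have hr2 : a (r - 2) = 0 := hz (r - 2) (by omega) le_rfl
  have hrm1 : a (r - 1) = 0 := by
    have := hpos (r - 1) (by omega) (by omega)
    have := hpos r (by omega) le_rfl
    linarith
  have hrz : a r = 0 := by
    have := hpos (r - 1) (by omega) (by omega)
    have := hpos r (by omega) le_rfl
    linarith
  intro k hk hkr
  by_cases hc : k ≤ r - 2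
  · exact hz k hk hc
  · rcases (by omega : k = r - 1 ∨ k = r) with h | h <;> rw [h]
    · exact hrm1
    · exact hrz
end
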